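/- The region {(x, y) ∈ ℝ² : 0 < x, x ≤ y, y ≤ 1, x² + y² > 1}, which in the Dhar–Sinha representation consists of the points representing equivalence classes of acute-angled triangles, has 2-dimensional Lebesgue measure (4 − π)/8. In particular its measure is strictly smaller than the measure (π − 2)/8 of the obtuse region, so in this representation too the proportion of obtuse-angled triangles exceeds that of acute-angled triangles. -/

import Mathlib

open Real MeasureTheory Set intervalIntegral

lemma graph_null {f : ℝ → ℝ} (hf : Measurable f) :
    volume {p : ℝ × ℝ | p.2 = f p.1} = 0 := by
  rw [MeasureTheory.Measure.volume_eq_prod ℝ ℝ, Measure.prod_apply (measurableSet_graph hf)]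
  have h : ∀ x : ℝ, (Prod.mk x ⁻¹' {p : ℝ × ℝ | p.2 = f p.1}) = {f x} := by
    intro x; ext y; simp [Set.mem_preimage]
  simp [h]

lemma int_sqrt_part : ∫ x in (0:ℝ)..(Real.sqrt 2 / 2), Real.sqrt (1 - x ^ 2) = π / 8 + 1 / 4 := by
  have h2 : Real.sqrt 2 * Real.sqrt 2 = 2 := Real.mul_self_sqrt (by norm_num)
  calc ∫ x in (0:ℝ)..(Real.sqrt 2 / 2), Real.sqrt (1 - x ^ 2)
      = ∫ x in (Real.sin 0)..(Real.sin (π/4)), Real.sqrt (1 - x ^ 2) := by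
        rw [Real.sin_zero, Real.sin_pi_div_four]
    _ = ∫ x in (0:ℝ)..(π/4), Real.sqrt (1 - Real.sin x ^ 2) * Real.cos x :=
        (integral_comp_mul_deriv (fun x _ => Real.hasDerivAt_sin x) Real.continuousOn_cos
          (Real.continuous_sqrt.comp (by continuity))).symm
    _ = ∫ x in (0:ℝ)..(π/4), Real.cos x ^ 2 := by
        refine integral_congr_ae (MeasureTheory.ae_of_all _ fun x h => ?_)
        rw [uIoc_of_le (by positivity), Set.mem_Ioc] at h
        rw [← Real.cos_eq_sqrt_one_sub_sin_sq (by linarith [Real.pi_pos])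
          (by linarith [Real.pi_pos]), pow_two]
    _ = π / 8 + 1 / 4 := by
        rw [integral_cos_sq]
        rw [Real.cos_pi_div_four, Real.sin_pi_div_four, Real.cos_zero, Real.sin_zero]
        nlinarith [h2]

theorem dhar_sinha_acute_region_area :
    volume {p : ℝ × ℝ | 0 < p.1 ∧ p.1 ≤ p.2 ∧ p.2 ≤ 1 ∧
        p.1 ^ 2 + p.2 ^ 2 > 1} = ENNReal.ofReal ((4 - π) / 8) ∧
    (4 - π) / 8 < (π - 2) / 8 := by
  constructor
  · set S : Set (ℝ × ℝ) := {p : ℝ × ℝ | 0 < p.1 ∧ p.1 ≤ p.2 ∧ p.2 ≤ 1 ∧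
        p.1 ^ 2 + p.2 ^ 2 > 1} with hS
    set f : ℝ → ℝ := fun x => max x (Real.sqrt (1 - x ^ 2)) with hf
    have hfc : Continuous f := continuous_id.max (Real.continuous_sqrt.comp (by continuity))
    set R : Set (ℝ × ℝ) := regionBetween f (fun _ => (1:ℝ)) (Ioo 0 1) with hR
    -- R ⊆ S
    have hRS : R ⊆ S := by
      rintro ⟨x, y⟩ ⟨hx, hy1, hy2⟩
      simp only [hS, Set.mem_setOf_eq]
      have hx0 : 0 < x := hx.1
      have hxy : x < y := lt_of_le_of_lt (le_max_left _ _) hy1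
      have hsy : Real.sqrt (1 - x ^ 2) < y := lt_of_le_of_lt (le_max_right _ _) hy1
      have hy0 : 0 ≤ Real.sqrt (1 - x ^ 2) := Real.sqrt_nonneg _
      have : 1 - x ^ 2 < y ^ 2 := by
        rcases le_or_gt (1 - x ^ 2) 0 with h | h
        · nlinarith
        · nlinarith [Real.sq_sqrt h.le, Real.sqrt_nonneg (1 - x ^ 2)]
      exact ⟨hx0, hxy.le, hy2.le, by nlinarith⟩
    -- S \ R ⊆ null set
    have hdiff : S \ R ⊆ {p : ℝ × ℝ | p.2 = p.1} ∪ {p : ℝ × ℝ | p.2 = (1:ℝ)} := by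
      rintro ⟨x, y⟩ ⟨⟨hx0, hxy, hy1, hcirc⟩, hnot⟩
      by_contra hmem
      simp only [Set.mem_union, Set.mem_setOf_eq, not_or] at hmem
      apply hnot
      have hxy' : x < y := lt_of_le_of_ne hxy (fun h => hmem.1 h.symm)
      have hy1' : y < 1 := lt_of_le_of_ne hy1 hmem.2
      refine ⟨⟨hx0, lt_trans hxy' hy1'⟩, ?_, hy1'⟩
      simp only [hf, max_lt_iff]
      refine ⟨hxy', ?_⟩
      have hy0 : 0 < y := lt_trans hx0 hxy'
      rw [Real.sqrt_lt' hy0]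
      nlinarith
    have hnull : volume (S \ R) = 0 := by
      refine measure_mono_null hdiff ?_
      have g1 : volume {p : ℝ × ℝ | p.2 = p.1} = 0 :=
        graph_null (f := fun x => x) measurable_id
      have g2 : volume {p : ℝ × ℝ | p.2 = (1:ℝ)} = 0 :=
        graph_null (f := fun _ => (1:ℝ)) measurable_const
      refine le_antisymm (le_trans (measure_union_le _ _) ?_) (by positivity)
      rw [g1, g2, add_zero]
    have hvolSR : volume S = volume R := by
      refine le_antisymm ?_ (measure_mono hRS)
      calc volume S ≤ volume (R ∪ (S \ R)) := measure_mono (fun p hp => by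
              by_cases h : p ∈ R
              · exact Or.inl h
              · exact Or.inr ⟨hp, h⟩)
        _ ≤ volume R + volume (S \ R) := measure_union_le _ _
        _ = volume R := by rw [hnull, add_zero]
    rw [hvolSR, hR, MeasureTheory.Measure.volume_eq_prod ℝ ℝ]
    have hfint : IntegrableOn f (Ioo 0 1) volume :=
      (hfc.integrableOn_Icc).mono_set Set.Ioo_subset_Icc_self
    have hgint : IntegrableOn (fun _ : ℝ => (1:ℝ)) (Ioo 0 1) volume :=
      integrableOn_const (by simp [Real.volume_Ioo])
    rw [volume_regionBetween_eq_integral hfint hgint measurableSet_Ioo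
      (fun x hx => by
        simp only [hf, max_le_iff]
        exact ⟨hx.2.le, Real.sqrt_le_one.2 (by nlinarith [hx.1, hx.2])⟩)]
    congr 1
    -- compute the integral
    set c : ℝ := Real.sqrt 2 / 2 with hc
    have h2 : Real.sqrt 2 * Real.sqrt 2 = 2 := Real.mul_self_sqrt (by norm_num)
    have hc0 : 0 < c := by positivity
    have hc1 : c < 1 := by nlinarith
    have hcsq : c ^ 2 = 1 / 2 := by rw [hc]; ring_nf; nlinarith
    rw [← MeasureTheory.integral_Ioc_eq_integral_Ioo,
      ← intervalIntegral.integral_of_le (zero_le_one)]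
    have hsplit : ∫ x in (0:ℝ)..1, ((fun _ : ℝ => (1:ℝ)) - f) x
        = (∫ x in (0:ℝ)..c, ((fun _ : ℝ => (1:ℝ)) - f) x)
          + ∫ x in c..1, ((fun _ : ℝ => (1:ℝ)) - f) x := by
      rw [intervalIntegral.integral_add_adjacent_intervals] <;>
        exact ((continuous_const.sub hfc).intervalIntegrable _ _)
    rw [hsplit]
    have e1 : ∫ x in (0:ℝ)..c, ((fun _ : ℝ => (1:ℝ)) - f) x
        = ∫ x in (0:ℝ)..c, (1 - Real.sqrt (1 - x ^ 2)) := by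
      refine intervalIntegral.integral_congr (fun x hx => ?_)
      rw [uIcc_of_le hc0.le] at hx
      simp only [Pi.sub_apply, hf]
      have hx2 : x ^ 2 ≤ 1 / 2 := by nlinarith [hx.1, hx.2]
      have : x ≤ Real.sqrt (1 - x ^ 2) := by
        rcases le_or_gt x 0 with h | h
        · exact le_trans h (Real.sqrt_nonneg _)
        · rw [Real.le_sqrt h.le]
          all_goals nlinarith
      rw [max_eq_right this]
    have e2 : ∫ x in c..(1:ℝ), ((fun _ : ℝ => (1:ℝ)) - f) x
        = ∫ x in c..(1:ℝ), (1 - x) := by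
      refine intervalIntegral.integral_congr (fun x hx => ?_)
      rw [uIcc_of_le hc1.le] at hx
      simp only [Pi.sub_apply, hf]
      have hx0 : 0 ≤ x := le_trans hc0.le hx.1
      have : Real.sqrt (1 - x ^ 2) ≤ x := by
        have h1 : 1 - x ^ 2 ≤ x ^ 2 := by nlinarith [hx.1, hx.2]
        calc Real.sqrt (1 - x ^ 2) ≤ Real.sqrt (x ^ 2) := Real.sqrt_le_sqrt h1
          _ = x := by rw [Real.sqrt_sq hx0]
      rw [max_eq_left this]
    rw [e1, e2]
    have i1 : ∫ x in (0:ℝ)..c, (1 - Real.sqrt (1 - x ^ 2))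
        = c - (π / 8 + 1 / 4) := by
      rw [intervalIntegral.integral_sub (g := fun x : ℝ => Real.sqrt (1 - x ^ 2)) (intervalIntegrable_const)
        (((continuous_const.sub (continuous_pow 2)).sqrt).intervalIntegrable _ _),
        int_sqrt_part]
      simp
    have i2 : ∫ x in c..(1:ℝ), ((1:ℝ) - x) = (1 - c) - (1 - c ^ 2) / 2 := by
      rw [intervalIntegral.integral_sub intervalIntegrable_const
        ((by continuity : Continuous fun x : ℝ => x).intervalIntegrable _ _), integral_id, intervalIntegral.integral_const]
      simp
    rw [i1, i2]
    nlinarith [Real.pi_pos]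
  · nlinarith [Real.pi_gt_three]
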